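/- Let C be a tensor category over an algebraically closed field k, let I₁, I₂ be small categories, and let F₁, G₁ : I₁ → C and F₂, G₂ : I₂ → C be functors. Then the linear map Nat(F₁, G₁) ⊗_k Nat(F₂, G₂) → Nat(F₁ ⊗ F₂, G₁ ⊗ G₂) induced by the tensor product is injective. -/

import Mathlib

open CategoryTheory CategoryTheory.MonoidalCategory CategoryTheory.Limits TensorProduct

variable {k : Type*} [Field k]
variable {C : Type*} [Category C] [Abelian C] [Linear k C]
  [MonoidalCategory C] [MonoidalPreadditive C] [MonoidalLinear k C]
variable {I₁ I₂ : Type*} [SmallCategory I₁] [SmallCategory I₂]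

/-- The functor `F₁ ⊗ F₂ : I₁ × I₂ ⥤ C`, `(X, Y) ↦ F₁(X) ⊗ F₂(Y)`. -/
@[simps]
def tensorFunctor (F₁ : I₁ ⥤ C) (F₂ : I₂ ⥤ C) : I₁ × I₂ ⥤ C where
  obj X := F₁.obj X.1 ⊗ F₂.obj X.2
  map f := F₁.map f.1 ⊗ₘ F₂.map f.2
  map_id X := by simp [tensorHom_id]
  map_comp f g := by simp [tensorHom_comp_tensorHom]

/-- The natural transformation `c ⊗ f : F₁ ⊗ F₂ ⟶ G₁ ⊗ G₂` with components `c_X ⊗ f_Y`. -/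
@[simps]
def tensorNatTrans {F₁ G₁ : I₁ ⥤ C} {F₂ G₂ : I₂ ⥤ C} (c : F₁ ⟶ G₁) (f : F₂ ⟶ G₂) :
    tensorFunctor F₁ F₂ ⟶ tensorFunctor G₁ G₂ where
  app X := c.app X.1 ⊗ₘ f.app X.2
  naturality X Y g := by
    simp only [tensorFunctor_map]
    erw [tensorHom_comp_tensorHom, tensorHom_comp_tensorHom, c.naturality, f.naturality]

/-- The `k`-linear map `Nat(F₁, G₁) ⊗[k] Nat(F₂, G₂) → Nat(F₁ ⊗ F₂, G₁ ⊗ G₂)` induced by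
the tensor product. -/
noncomputable def natTensorNat (F₁ G₁ : I₁ ⥤ C) (F₂ G₂ : I₂ ⥤ C) :
    (F₁ ⟶ G₁) ⊗[k] (F₂ ⟶ G₂) →ₗ[k] (tensorFunctor F₁ F₂ ⟶ tensorFunctor G₁ G₂) :=
  TensorProduct.lift <| LinearMap.mk₂ k tensorNatTrans
    (fun c c' f => by ext X; simp [MonoidalPreadditive.add_tensor]; rfl)
    (fun a c f => by ext X; simp [MonoidalCategory.tensorHom_def]; rfl)
    (fun c f f' => by ext X; simp [MonoidalPreadditive.tensor_add]; rfl)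
    (fun a c f => by ext X; simp [MonoidalCategory.tensorHom_def]; rfl)

set_option linter.unusedSectionVars false
set_option maxHeartbeats 1000000

section LinAux

variable {K : Type*} [Field K] {M N : Type*} [AddCommGroup M] [Module K M]
  [AddCommGroup N] [Module K N] {ι : Type*} [DecidableEq ι]

noncomputable def coordR (b : Module.Basis ι K N) : M ⊗[K] N ≃ₗ[K] (ι →₀ M) :=
  (TensorProduct.congr (LinearEquiv.refl K M) b.repr).trans
    (TensorProduct.finsuppScalarRight K K M ι)

lemma coordR_tmul (b : Module.Basis ι K N) (m : M) (n : N) (i : ι) :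
    coordR b (m ⊗ₜ[K] n) i = b.repr n i • m := by
  simp [coordR, TensorProduct.congr_tmul]

lemma coordR_sum_apply (b : Module.Basis ι K N) (s : Finset ι) (m : ι → M) (i : ι) :
    coordR b (∑ j ∈ s, m j ⊗ₜ[K] b j) i = if i ∈ s then m i else 0 := by
  rw [map_sum, Finsupp.finset_sum_apply]
  have : ∀ j ∈ s, coordR b (m j ⊗ₜ[K] b j) i = if j = i then m j else 0 := by
    intro j _
    rw [coordR_tmul, Module.Basis.repr_self]
    by_cases h : j = i <;> simp [h, Finsupp.single_apply]
  rw [Finset.sum_congr rfl this]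
  by_cases hi : i ∈ s
  · rw [Finset.sum_eq_single_of_mem i hi (fun j _ hj => by simp [hj]), if_pos rfl, if_pos hi]
  · rw [if_neg hi, Finset.sum_eq_zero]
    intro j hj
    have : j ≠ i := fun h => hi (h ▸ hj)
    simp [this]

lemma sum_tmul_basisR_eq_zero (b : Module.Basis ι K N) {s : Finset ι} {m : ι → M}
    (h : ∑ j ∈ s, m j ⊗ₜ[K] b j = 0) : ∀ j ∈ s, m j = 0 := by
  intro j hj
  have h2 : coordR b (∑ j ∈ s, m j ⊗ₜ[K] b j) j = 0 := by rw [h]; simp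
  rw [coordR_sum_apply] at h2
  simpa [hj] using h2

lemma exists_reprR (b : Module.Basis ι K N) (t : M ⊗[K] N) :
    ∃ (s : Finset ι) (m : ι → M), t = ∑ j ∈ s, m j ⊗ₜ[K] b j := by
  refine ⟨(coordR b t).support, coordR b t, (coordR b).injective ?_⟩
  ext i
  rw [coordR_sum_apply]
  by_cases hi : i ∈ (coordR b t).support
  · simp [hi]
  · simp only [if_neg hi]
    simpa using Finsupp.notMem_support_iff.mp hi

noncomputable def coordL (b : Module.Basis ι K M) : M ⊗[K] N ≃ₗ[K] (ι →₀ N) :=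
  (TensorProduct.congr b.repr (LinearEquiv.refl K N)).trans
    (TensorProduct.finsuppScalarLeft K N ι)

lemma coordL_tmul (b : Module.Basis ι K M) (m : M) (n : N) (i : ι) :
    coordL b (m ⊗ₜ[K] n) i = b.repr m i • n := by
  simp [coordL, TensorProduct.congr_tmul]

lemma coordL_sum_apply (b : Module.Basis ι K M) (s : Finset ι) (n : ι → N) (i : ι) :
    coordL b (∑ j ∈ s, b j ⊗ₜ[K] n j) i = if i ∈ s then n i else 0 := by
  rw [map_sum, Finsupp.finset_sum_apply]
  have : ∀ j ∈ s, coordL b (b j ⊗ₜ[K] n j) i = if j = i then n j else 0 := by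
    intro j _
    rw [coordL_tmul, Module.Basis.repr_self]
    by_cases h : j = i <;> simp [h, Finsupp.single_apply]
  rw [Finset.sum_congr rfl this]
  by_cases hi : i ∈ s
  · rw [Finset.sum_eq_single_of_mem i hi (fun j _ hj => by simp [hj]), if_pos rfl, if_pos hi]
  · rw [if_neg hi, Finset.sum_eq_zero]
    intro j hj
    have : j ≠ i := fun h => hi (h ▸ hj)
    simp [this]

lemma sum_tmul_basisL_eq_zero (b : Module.Basis ι K M) {s : Finset ι} {n : ι → N}
    (h : ∑ j ∈ s, b j ⊗ₜ[K] n j = 0) : ∀ j ∈ s, n j = 0 := by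
  intro j hj
  have h2 : coordL b (∑ j ∈ s, b j ⊗ₜ[K] n j) j = 0 := by rw [h]; simp
  rw [coordL_sum_apply] at h2
  simpa [hj] using h2

lemma exists_reprL (b : Module.Basis ι K M) (t : M ⊗[K] N) :
    ∃ (s : Finset ι) (n : ι → N), t = ∑ j ∈ s, b j ⊗ₜ[K] n j := by
  refine ⟨(coordL b t).support, coordL b t, (coordL b).injective ?_⟩
  ext i
  rw [coordL_sum_apply]
  by_cases hi : i ∈ (coordL b t).support
  · simp [hi]
  · simp only [if_neg hi]
    simpa using Finsupp.notMem_support_iff.mp hi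

omit [DecidableEq ι] in
lemma basis_finset_indep (b : Module.Basis ι K N) (s : Finset ι) (lam : ι → K)
    (h : ∑ j ∈ s, lam j • b j = 0) : ∀ j ∈ s, lam j = 0 := by
  classical
  intro j hj
  have h' := congrArg (fun v => b.repr v j) h
  simp only [map_sum, map_smul, Module.Basis.repr_self, map_zero, Finsupp.coe_zero,
    Pi.zero_apply, Finsupp.finset_sum_apply, Finsupp.coe_smul, Pi.smul_apply] at h'
  rw [Finset.sum_eq_single_of_mem j hj (fun i _ hij => by simp [Finsupp.single_apply, hij])] at h'
  simpa using h'

end LinAux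


lemma key_ind {ι : Type*} [IsAlgClosed k] [Simple (𝟙_ C)]
    [FiniteDimensional k (𝟙_ C ⟶ 𝟙_ C)]
    (M₀ : C) (s : Finset ι) :
    ∀ (Z : C) (g : ι → (𝟙_ C ⟶ Z)),
      (∀ lam : ι → k, (∑ j ∈ s, lam j • g j) = 0 → ∀ j ∈ s, lam j = 0) →
      ∀ (m : ι → (M₀ ⟶ 𝟙_ C)), (∑ j ∈ s, m j ≫ g j) = 0 → ∀ j ∈ s, m j = 0 := by
  classical
  induction s using Finset.cons_induction with
  | empty => simp
  | cons a s' ha ih =>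
    intro Z g hg m hm
    have ga_ne : g a ≠ 0 := by
      intro h0
      have h1 : (∑ j ∈ Finset.cons a s' ha,
          (fun j => if j = a then (1 : k) else 0) j • g j) = 0 := by
        rw [Finset.sum_cons, Finset.sum_eq_zero (fun j hj => by
          have : j ≠ a := fun h => ha (h ▸ hj)
          simp [this]), add_zero]
        simp [h0]
      have := hg _ h1 a (Finset.mem_cons_self a s')
      simp at this
    haveI : Mono (g a) := mono_of_nonzero_from_simple ga_ne
    set q : Z ⟶ cokernel (g a) := cokernel.π (g a) with hq
    have hg' : ∀ lam : ι → k, (∑ j ∈ s', lam j • (g j ≫ q)) = 0 → ∀ j ∈ s', lam j = 0 := by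
      intro lam hl
      have hw : (∑ j ∈ s', lam j • g j) ≫ q = 0 := by
        rw [Preadditive.sum_comp]
        simpa [CategoryTheory.Linear.smul_comp] using hl
      set w : 𝟙_ C ⟶ Z := ∑ j ∈ s', lam j • g j with hwdef
      obtain ⟨μ, hu⟩ := endomorphism_simple_eq_smul_id k (Abelian.monoLift (g a) w hw)
      have hfac : (μ • 𝟙 (𝟙_ C)) ≫ g a = w := by rw [hu]; exact Abelian.monoLift_comp (g a) w hw
      have hsum : (∑ j ∈ Finset.cons a s' ha,
          (fun j => if j = a then -μ else lam j) j • g j) = 0 := by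
        rw [Finset.sum_cons]
        have : (∑ j ∈ s', (fun j => if j = a then -μ else lam j) j • g j) = w := by
          rw [hwdef]
          refine Finset.sum_congr rfl fun j hj => ?_
          have : j ≠ a := fun h => ha (h ▸ hj)
          simp [this]
        rw [this, ← hfac]
        simp [CategoryTheory.Linear.smul_comp]
      intro j hj
      have := hg _ hsum j (Finset.mem_cons_of_mem hj)
      have hja : j ≠ a := fun h => ha (h ▸ hj)
      simpa [hja] using this
    have hm' : (∑ j ∈ s', m j ≫ (g j ≫ q)) = 0 := by
      have h1 : (∑ j ∈ Finset.cons a s' ha, m j ≫ g j) ≫ q = 0 := by rw [hm]; simp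
      rw [Preadditive.sum_comp, Finset.sum_cons] at h1
      have h2 : (m a ≫ g a) ≫ q = 0 := by
        rw [Category.assoc, hq, cokernel.condition, Limits.comp_zero]
      rw [h2, zero_add] at h1
      simpa [Category.assoc] using h1
    have hz := ih (cokernel (g a)) (fun j => g j ≫ q) hg' m hm'
    intro j hj
    rcases Finset.mem_cons.mp hj with h | h
    · subst h
      have : m j ≫ g j = 0 := by
        have := hm
        rw [Finset.sum_cons, Finset.sum_eq_zero (fun i hi => by rw [hz i hi, Limits.zero_comp]),
          add_zero] at this
        exact this
      exact zero_of_comp_mono (g j) this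
    · exact hz j h

section Dual
variable [RigidCategory C] (A₁ B₁ A₂ B₂ : C)

noncomputable def alphaMap : (A₁ ⟶ B₁) →ₗ[k] ((B₁ᘁ : C) ⊗ A₁ ⟶ 𝟙_ C) where
  toFun c := (tensorLeftHomEquiv A₁ B₁ (B₁ᘁ) (𝟙_ C)).symm (c ≫ (ρ_ B₁).inv)
  map_add' c c' := by
    simp [tensorLeftHomEquiv, Preadditive.add_comp, Preadditive.comp_add]
  map_smul' a c := by
    simp [tensorLeftHomEquiv, CategoryTheory.Linear.smul_comp, CategoryTheory.Linear.comp_smul]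

lemma alphaMap_injective : Function.Injective (alphaMap (k := k) A₁ B₁) := by
  intro c c' h
  have := (tensorLeftHomEquiv A₁ B₁ (B₁ᘁ) (𝟙_ C)).symm.injective h
  simpa [cancel_mono] using this

noncomputable def betaMap : (A₂ ⟶ B₂) →ₗ[k] (𝟙_ C ⟶ B₂ ⊗ (A₂ᘁ : C)) where
  toFun f := (tensorRightHomEquiv (𝟙_ C) A₂ (A₂ᘁ) B₂) ((λ_ A₂).hom ≫ f)
  map_add' f f' := by
    simp [tensorRightHomEquiv, Preadditive.add_comp, Preadditive.comp_add]
  map_smul' a f := by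
    simp [tensorRightHomEquiv, CategoryTheory.Linear.smul_comp, CategoryTheory.Linear.comp_smul]

lemma betaMap_injective : Function.Injective (betaMap (k := k) A₂ B₂) := by
  intro f f' h
  have := (tensorRightHomEquiv (𝟙_ C) A₂ (A₂ᘁ) B₂).injective h
  simpa [cancel_epi] using this

noncomputable def gammaMap : (A₁ ⊗ A₂ ⟶ B₁ ⊗ B₂) →ₗ[k] ((B₁ᘁ : C) ⊗ A₁ ⟶ B₂ ⊗ (A₂ᘁ : C)) where
  toFun T := (tensorLeftHomEquiv A₁ B₁ (B₁ᘁ) (B₂ ⊗ (A₂ᘁ : C))).symm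
      ((tensorRightHomEquiv A₁ A₂ (A₂ᘁ) (B₁ ⊗ B₂) T) ≫ (α_ B₁ B₂ (A₂ᘁ : C)).hom)
  map_add' T T' := by
    simp [tensorLeftHomEquiv, tensorRightHomEquiv, Preadditive.add_comp, Preadditive.comp_add]
  map_smul' a T := by
    simp [tensorLeftHomEquiv, tensorRightHomEquiv,
      CategoryTheory.Linear.smul_comp, CategoryTheory.Linear.comp_smul]

lemma gamma_tensorHom (c : A₁ ⟶ B₁) (f : A₂ ⟶ B₂) :
    gammaMap (k := k) A₁ B₁ A₂ B₂ (c ⊗ₘ f) =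
      alphaMap (k := k) A₁ B₁ c ≫ betaMap (k := k) A₂ B₂ f := by
  dsimp [gammaMap, alphaMap, betaMap]
  apply (tensorLeftHomEquiv A₁ B₁ (B₁ᘁ) (B₂ ⊗ (A₂ᘁ : C))).injective
  rw [Equiv.apply_symm_apply]
  rw [tensorLeftHomEquiv_naturality]
  rw [Equiv.apply_symm_apply]
  dsimp [tensorRightHomEquiv]
  calc ((ρ_ A₁).inv ≫ A₁ ◁ η_ A₂ (A₂ᘁ) ≫ (α_ A₁ A₂ (A₂ᘁ)).inv ≫ (c ⊗ₘ f) ▷ (A₂ᘁ)) ≫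
        (α_ B₁ B₂ (A₂ᘁ)).hom
      = 𝟙 _ ⊗≫ (A₁ ◁ η_ A₂ (A₂ᘁ) ≫ c ▷ (A₂ ⊗ (A₂ᘁ))) ⊗≫ B₁ ◁ (f ▷ (A₂ᘁ)) := by
        rw [MonoidalCategory.tensorHom_def]; monoidal
    _ = 𝟙 _ ⊗≫ (c ▷ 𝟙_ C ≫ B₁ ◁ η_ A₂ (A₂ᘁ)) ⊗≫ B₁ ◁ (f ▷ (A₂ᘁ)) := by
        rw [whisker_exchange]
    _ = (c ≫ (ρ_ B₁).inv) ≫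
        B₁ ◁ ((ρ_ (𝟙_ C)).inv ≫ 𝟙_ C ◁ η_ A₂ (A₂ᘁ) ≫ (α_ (𝟙_ C) A₂ (A₂ᘁ)).inv ≫
          ((λ_ A₂).hom ≫ f) ▷ (A₂ᘁ)) := by
        monoidal

/-- The bilinear "tensor product of morphisms" map on a pair of hom spaces. -/
noncomputable def homTensorBil : (A₁ ⟶ B₁) →ₗ[k] (A₂ ⟶ B₂) →ₗ[k] (A₁ ⊗ A₂ ⟶ B₁ ⊗ B₂) :=
  LinearMap.mk₂ k (fun c f => c ⊗ₘ f)
    (fun c c' f => MonoidalPreadditive.add_tensor c c' f)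
    (fun a c f => by simp [MonoidalCategory.tensorHom_def, CategoryTheory.Linear.smul_comp])
    (fun c f f' => MonoidalPreadditive.tensor_add c f f')
    (fun a c f => by simp [MonoidalCategory.tensorHom_def, CategoryTheory.Linear.comp_smul])

lemma homTensor_injective [IsAlgClosed k] [Simple (𝟙_ C)]
    [∀ X Y : C, FiniteDimensional k (X ⟶ Y)] :
    Function.Injective (TensorProduct.lift (homTensorBil (k := k) A₁ B₁ A₂ B₂)) := by
  classical
  rw [injective_iff_map_eq_zero]
  intro t ht
  obtain ⟨s, m, rfl⟩ := exists_reprR (Module.Basis.ofVectorSpace k (A₂ ⟶ B₂)) t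
  set b := Module.Basis.ofVectorSpace k (A₂ ⟶ B₂) with hb
  have hsum : (∑ j ∈ s, (m j ⊗ₘ b j : A₁ ⊗ A₂ ⟶ B₁ ⊗ B₂)) = 0 := by
    rw [map_sum] at ht
    simpa [homTensorBil] using ht
  have hgamma : (∑ j ∈ s,
      alphaMap (k := k) A₁ B₁ (m j) ≫ betaMap (k := k) A₂ B₂ (b j)) = 0 := by
    have := congrArg (gammaMap (k := k) A₁ B₁ A₂ B₂) hsum
    rw [map_sum, map_zero] at this
    simpa only [gamma_tensorHom] using this
  have hindep : ∀ lam : (Module.Basis.ofVectorSpaceIndex k (A₂ ⟶ B₂)) → k,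
      (∑ j ∈ s, lam j • betaMap (k := k) A₂ B₂ (b j)) = 0 → ∀ j ∈ s, lam j = 0 := by
    intro lam hl
    have : betaMap (k := k) A₂ B₂ (∑ j ∈ s, lam j • b j) = 0 := by
      rw [map_sum]
      simpa [map_smul] using hl
    have h0 : (∑ j ∈ s, lam j • b j) = 0 := by
      apply betaMap_injective (k := k) A₂ B₂
      rw [this]
      exact (map_zero _).symm
    exact basis_finset_indep b s lam h0
  have halpha := key_ind ((B₁ᘁ : C) ⊗ A₁) s (B₂ ⊗ (A₂ᘁ : C))
    (fun j => betaMap (k := k) A₂ B₂ (b j)) hindep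
    (fun j => alphaMap (k := k) A₁ B₁ (m j)) hgamma
  have hm : ∀ j ∈ s, m j = 0 := by
    intro j hj
    have h1 : alphaMap (k := k) A₁ B₁ (m j) = 0 := halpha j hj
    apply alphaMap_injective (k := k) A₁ B₁
    rw [h1]
    exact (map_zero _).symm
  rw [Finset.sum_eq_zero fun j hj => by rw [hm j hj, TensorProduct.zero_tmul]]

end Dual

/-- Evaluation of natural transformations at an object, as a linear map. -/
noncomputable def appLin {I : Type*} [SmallCategory I] (F G : I ⥤ C) (X : I) :
    (F ⟶ G) →ₗ[k] (F.obj X ⟶ G.obj X) where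
  toFun c := c.app X
  map_add' c c' := rfl
  map_smul' a c := rfl


/-- In a tensor category over an algebraically closed field `k`, the
linear map `Nat(F₁, G₁) ⊗[k] Nat(F₂, G₂) → Nat(F₁ ⊗ F₂, G₁ ⊗ G₂)` induced by the tensor
product is injective. -/
theorem natTensorNat_injective
    [IsAlgClosed k] [RigidCategory C] [Simple (𝟙_ C)]
    [∀ X : C, IsNoetherianObject X] [∀ X : C, IsArtinianObject X]
    [∀ X Y : C, FiniteDimensional k (X ⟶ Y)]
    (F₁ G₁ : I₁ ⥤ C) (F₂ G₂ : I₂ ⥤ C) :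
    Function.Injective (natTensorNat (k := k) F₁ G₁ F₂ G₂) := by
  classical
  rw [injective_iff_map_eq_zero]
  intro t ht
  obtain ⟨s, c, rfl⟩ := exists_reprR (Module.Basis.ofVectorSpace k (F₂ ⟶ G₂)) t
  set b := Module.Basis.ofVectorSpace k (F₂ ⟶ G₂) with hb
  have hten : (∑ j ∈ s, tensorNatTrans (c j) (b j)) = 0 := by
    rw [map_sum] at ht
    simpa [natTensorNat] using ht
  have happ : ∀ (X : I₁) (Y : I₂),
      (∑ j ∈ s, ((c j).app X ⊗ₘ (b j).app Y :
        F₁.obj X ⊗ F₂.obj Y ⟶ G₁.obj X ⊗ G₂.obj Y)) = 0 := by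
    intro X Y
    have := congrArg (fun τ : tensorFunctor F₁ F₂ ⟶ tensorFunctor G₁ G₂ => τ.app (X, Y)) hten
    simp only [NatTrans.app_sum, tensorNatTrans_app] at this
    exact this
  have hc : ∀ j ∈ s, c j = 0 := by
    intro j hj
    ext X
    have htX : (∑ i ∈ s, ((c i).app X) ⊗ₜ[k] (b i)) = 0 := by
      set b' := Module.Basis.ofVectorSpace k (F₁.obj X ⟶ G₁.obj X) with hb'
      obtain ⟨s₂, h, hrep⟩ := exists_reprL b' (∑ i ∈ s, ((c i).app X) ⊗ₜ[k] (b i))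
      have hY : ∀ i ∈ s₂, h i = 0 := by
        intro i hi
        ext Y
        have h0 : (LinearMap.lTensor _ (appLin (k := k) F₂ G₂ Y))
            (∑ i ∈ s, ((c i).app X) ⊗ₜ[k] (b i)) = 0 := by
          apply homTensor_injective (k := k) (F₁.obj X) (G₁.obj X) (F₂.obj Y) (G₂.obj Y)
          rw [map_zero, map_sum]
          simp only [LinearMap.lTensor_tmul]
          rw [map_sum]
          simpa [homTensorBil, appLin] using happ X Y
        rw [hrep, map_sum] at h0
        simp only [LinearMap.lTensor_tmul] at h0
        have := sum_tmul_basisL_eq_zero b' h0 i hi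
        simpa [appLin] using this
      rw [hrep, Finset.sum_eq_zero fun i hi => by rw [hY i hi, TensorProduct.tmul_zero]]
    exact sum_tmul_basisR_eq_zero b htX j hj
  rw [Finset.sum_eq_zero fun j hj => by rw [hc j hj, TensorProduct.zero_tmul]]
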